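/- Let (X, 𝓛_X) and (Y, 𝓛_Y) be locally small spaces and f : X → Y a mapping. Then f is bounded and continuous if and only if f is strictly continuous, i.e., for every admissible open family 𝓥 in (Y, 𝓛_Y), the family f⁻¹(𝓥) = {f⁻¹(V) : V ∈ 𝓥} is an admissible open family in (X, 𝓛_X). -/

import Mathlib

open Set

/-- The family of sets compatible with a family `L`:
`L° = {Y : ∀ M ∈ L, Y ∩ M ∈ L}`. -/
def compatible {X : Type*} (L : Set (Set X)) : Set (Set X) :=
  {Y | ∀ M ∈ L, Y ∩ M ∈ L}

/-- The small sets: `Lˢ = {B : ∃ M ∈ L, B ⊆ M}`. -/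
def smalls {X : Type*} (L : Set (Set X)) : Set (Set X) :=
  {B | ∃ M ∈ L, B ⊆ M}

/-- The weakly open sets: `L^wo = {⋃₀ U : U ⊆ L}`. -/
def weaklyOpens {X : Type*} (L : Set (Set X)) : Set (Set X) :=
  {W | ∃ U ⊆ L, W = ⋃₀ U}

/-- `(X, L)` is a locally small space: `∅ ∈ L`, `L` is closed under binary
intersections and unions, and `L` covers `X`. -/
def IsLSS {X : Type*} (L : Set (Set X)) : Prop :=
  ∅ ∈ L ∧ (∀ a ∈ L, ∀ b ∈ L, a ∩ b ∈ L ∧ a ∪ b ∈ L) ∧ ⋃₀ L = Set.univ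

/-- An admissible (locally essentially finite) open family. -/
def Admissible {X : Type*} (L U : Set (Set X)) : Prop :=
  U ⊆ compatible L ∧
    ∀ M ∈ L, ∃ F ⊆ U, F.Finite ∧ (⋃₀ U) ∩ M = (⋃₀ F) ∩ M

/-- `f` is bounded: `𝓛_X` refines `f⁻¹(𝓛_Y)`. -/
def BoundedMap {X Y : Type*} (LX : Set (Set X)) (LY : Set (Set Y)) (f : X → Y) : Prop :=
  ∀ L ∈ LX, ∃ M ∈ LY, L ⊆ f ⁻¹' M

/-- `f` is continuous: preimages of smops are open. -/
def ContinuousMap' {X Y : Type*} (LX : Set (Set X)) (LY : Set (Set Y)) (f : X → Y) : Prop :=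
  ∀ M ∈ LY, f ⁻¹' M ∈ compatible LX

theorem bounded_continuous_iff_strictly_continuous {X Y : Type*}
    (LX : Set (Set X)) (LY : Set (Set Y))
    (hX : IsLSS LX) (hY : IsLSS LY) (f : X → Y) :
    (BoundedMap LX LY f ∧ ContinuousMap' LX LY f) ↔
      (∀ V : Set (Set Y), Admissible LY V → Admissible LX ((f ⁻¹' ·) '' V)) := by
  constructor
  · rintro ⟨hb, hc⟩ V ⟨hVopen, hVfin⟩
    constructor
    · rintro _ ⟨W, hW, rfl⟩ L hL
      obtain ⟨M, hM, hLM⟩ := hb L hL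
      have hWM : W ∩ M ∈ LY := hVopen hW M hM
      have hcomp := hc _ hWM L hL
      have heq : f ⁻¹' W ∩ L = f ⁻¹' (W ∩ M) ∩ L := by
        ext x
        simp only [Set.mem_inter_iff, Set.mem_preimage]
        exact ⟨fun ⟨h1, h2⟩ => ⟨⟨h1, hLM h2⟩, h2⟩, fun ⟨⟨h1, _⟩, h2⟩ => ⟨h1, h2⟩⟩
      rw [heq]; exact hcomp
    · intro L hL
      obtain ⟨M, hM, hLM⟩ := hb L hL
      obtain ⟨F, hFV, hFfin, hFeq⟩ := hVfin M hM
      refine ⟨(f ⁻¹' ·) '' F, Set.image_mono hFV, hFfin.image _, ?_⟩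
      have key : ∀ x ∈ L, (f x ∈ ⋃₀ V ↔ f x ∈ ⋃₀ F) := by
        intro x hx
        have hxM : f x ∈ M := hLM hx
        constructor
        · intro hxV
          have : f x ∈ (⋃₀ F) ∩ M := hFeq ▸ ⟨hxV, hxM⟩
          exact this.1
        · intro hxF
          have : f x ∈ (⋃₀ V) ∩ M := hFeq.symm ▸ ⟨hxF, hxM⟩
          exact this.1
      ext x
      simp only [Set.mem_inter_iff, Set.sUnion_image, Set.mem_iUnion, Set.mem_preimage,
        exists_prop]
      constructor
      · rintro ⟨⟨v, hv, hxv⟩, hx⟩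
        obtain ⟨w, hw, hxw⟩ := (key x hx).1 ⟨v, hv, hxv⟩
        exact ⟨⟨w, hw, hxw⟩, hx⟩
      · rintro ⟨⟨v, hv, hxv⟩, hx⟩
        obtain ⟨w, hw, hxw⟩ := (key x hx).2 ⟨v, hv, hxv⟩
        exact ⟨⟨w, hw, hxw⟩, hx⟩
  · intro h
    constructor
    · -- bounded
      have hadm : Admissible LY LY := by
        refine ⟨fun W hW M hM => (hY.2.1 W hW M hM).1, fun M hM => ⟨{M}, ?_, Set.finite_singleton M, ?_⟩⟩
        · simpa using hM
        · rw [hY.2.2, Set.sUnion_singleton, Set.univ_inter, Set.inter_self]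
      obtain ⟨_, hfin⟩ := h LY hadm
      intro L hL
      obtain ⟨F, hFsub, hFfin, hFeq⟩ := hfin L hL
      have hLF : L ⊆ ⋃₀ F := by
        intro x hx
        have hxU : x ∈ ⋃₀ ((f ⁻¹' ·) '' LY) := by
          have : f x ∈ ⋃₀ LY := by rw [hY.2.2]; trivial
          obtain ⟨M, hM, hxM⟩ := this
          exact ⟨f ⁻¹' M, ⟨M, hM, rfl⟩, hxM⟩
        have hxF : x ∈ ⋃₀ F ∩ L := by rw [← hFeq]; exact ⟨hxU, hx⟩
        exact hxF.1
      -- finite union of preimages is a preimage of a member of LY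
      have hMex : ∀ G : Set (Set X), G.Finite → G ⊆ (f ⁻¹' ·) '' LY →
          ∃ M ∈ LY, ⋃₀ G ⊆ f ⁻¹' M := by
        intro G hGfin
        refine Set.Finite.induction_on (motive := fun G _ => G ⊆ (f ⁻¹' ·) '' LY →
          ∃ M ∈ LY, ⋃₀ G ⊆ f ⁻¹' M) G hGfin (fun _ => ⟨∅, hY.1, by simp⟩) ?_
        intro a s ha hs ih hsub
        obtain ⟨M₂, hM₂, hsub₂⟩ := ih (fun t ht => hsub (Set.mem_insert_of_mem a ht))
        obtain ⟨M₁, hM₁, rfl⟩ := hsub (Set.mem_insert a s)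
        refine ⟨M₁ ∪ M₂, (hY.2.1 M₁ hM₁ M₂ hM₂).2, ?_⟩
        rw [Set.sUnion_insert]
        exact Set.union_subset (fun x hx => Or.inl hx) (fun x hx => Or.inr (hsub₂ hx))
      obtain ⟨M, hM, hsub⟩ := hMex F hFfin hFsub
      exact ⟨M, hM, fun x hx => hsub (hLF hx)⟩
    · -- continuous
      intro M hM
      have hadm : Admissible LY {M} := by
        refine ⟨?_, fun N hN => ⟨{M}, subset_rfl, Set.finite_singleton M, rfl⟩⟩
        rintro W (rfl : W = M)
        exact fun N hN => (hY.2.1 W hM N hN).1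
      have := (h {M} hadm).1
      exact this ⟨M, rfl, rfl⟩
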